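/- arXiv:math/0211232 — 2 statements merged into one kernel-verified Lean document; each statement's English description precedes it below -/
import Mathlib

section
/- For square-free N and each exact divisor m of N, the rescaled partial dual √m·(C_N)^{*,m} is isometric to C_N, i.e. C_N is strongly N-modular. -/
open scoped RealInnerProductSpace

/-- Index type for the lattice `C_N`: the divisors of `N`. -/
def divIdx (N : ℕ) : Type := {d : ℕ // d ∈ N.divisors}

instance (N : ℕ) : Fintype (divIdx N) := by unfold divIdx; infer_instance
instance (N : ℕ) : DecidableEq (divIdx N) := by unfold divIdx; infer_instance

/-- The standard orthogonal basis `√d · e_d` of the lattice `C_N = ⊥_{d∣N} √d ℤ`. -/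
noncomputable def cnBasis (N : ℕ) : divIdx N → EuclideanSpace ℝ (divIdx N) :=
  fun d => Real.sqrt d.1 • EuclideanSpace.single d 1

/-- The lattice `C_N = ⊥_{d∣N} √d ℤ`. -/
noncomputable def CN (N : ℕ) : Submodule ℤ (EuclideanSpace ℝ (divIdx N)) :=
  Submodule.span ℤ (Set.range (cnBasis N))

namespace CNAux

/-- The classical involution `d ↦ m d / gcd(m,d)²` on the divisors of `N`. -/
def sig (m d : ℕ) : ℕ := m * d / (Nat.gcd m d) ^ 2

lemma sig_eq (m d : ℕ) (hd : 0 < d) :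
    sig m d = (m / Nat.gcd m d) * (d / Nat.gcd m d) := by
  have hg : 0 < Nat.gcd m d := Nat.gcd_pos_of_pos_right m hd
  have h1 : m * d = (Nat.gcd m d) ^ 2 * ((m / Nat.gcd m d) * (d / Nat.gcd m d)) := by
    have hm' : Nat.gcd m d * (m / Nat.gcd m d) = m :=
      Nat.mul_div_cancel' (Nat.gcd_dvd_left m d)
    have hd' : Nat.gcd m d * (d / Nat.gcd m d) = d :=
      Nat.mul_div_cancel' (Nat.gcd_dvd_right m d)
    calc m * d = (Nat.gcd m d * (m / Nat.gcd m d)) * (Nat.gcd m d * (d / Nat.gcd m d)) := by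
          rw [hm', hd']
      _ = _ := by ring
  rw [sig, h1, Nat.mul_div_cancel_left _ (by positivity)]

lemma sig_pos (m d : ℕ) (hm : 0 < m) (hd : 0 < d) : 0 < sig m d := by
  have hg : 0 < Nat.gcd m d := Nat.gcd_pos_of_pos_right m hd
  rw [sig_eq m d hd]
  exact Nat.mul_pos
    (Nat.div_pos (Nat.le_of_dvd hm (Nat.gcd_dvd_left m d)) hg)
    (Nat.div_pos (Nat.le_of_dvd hd (Nat.gcd_dvd_right m d)) hg)

lemma sig_dvd (N m d : ℕ) (hm : m ∣ N) (hd : d ∣ N) (hN : 0 < N) : sig m d ∣ N := by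
  have hd0 : 0 < d := Nat.pos_of_dvd_of_pos hd hN
  rw [sig_eq m d hd0]
  exact (Nat.coprime_div_gcd_div_gcd (Nat.gcd_pos_of_pos_right m hd0)).mul_dvd_of_dvd_of_dvd
    ((Nat.div_dvd_of_dvd (Nat.gcd_dvd_left m d)).trans hm)
    ((Nat.div_dvd_of_dvd (Nat.gcd_dvd_right m d)).trans hd)

lemma sig_sig (N m d : ℕ) (hsq : Squarefree N) (hm : m ∣ N) (hd : d ∣ N) (hN : 0 < N) :
    sig m (sig m d) = d := by
  have hd0 : 0 < d := Nat.pos_of_dvd_of_pos hd hN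
  have hm0 : 0 < m := Nat.pos_of_dvd_of_pos hm hN
  set g := Nat.gcd m d with hg
  have hg0 : 0 < g := Nat.gcd_pos_of_pos_right m hd0
  have hmm : g * (m / g) = m := Nat.mul_div_cancel' (Nat.gcd_dvd_left m d)
  have hdd : g * (d / g) = d := Nat.mul_div_cancel' (Nat.gcd_dvd_right m d)
  have hm'0 : 0 < m / g := Nat.div_pos (Nat.le_of_dvd hm0 (Nat.gcd_dvd_left m d)) hg0
  have hd'0 : 0 < d / g := Nat.div_pos (Nat.le_of_dvd hd0 (Nat.gcd_dvd_right m d)) hg0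
  have hsig0 : 0 < sig m d := sig_pos m d hm0 hd0
  have hsqd : Squarefree d := hsq.squarefree_of_dvd hd
  have hco : Nat.Coprime g (d / g) := by
    have h' : Squarefree (g * (d / g)) := by rw [hdd]; exact hsqd
    exact Nat.coprime_of_squarefree_mul h'
  have hgcd2 : Nat.gcd m (sig m d) = m / g := by
    rw [sig_eq m d hd0, ← hg]
    calc Nat.gcd m ((m / g) * (d / g))
        = Nat.gcd ((m / g) * g) ((m / g) * (d / g)) := by rw [mul_comm (m / g) g, hmm]
      _ = (m / g) * Nat.gcd g (d / g) := Nat.gcd_mul_left _ _ _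
      _ = m / g := by rw [Nat.Coprime] at hco; rw [hco, mul_one]
  rw [sig_eq m (sig m d) hsig0, hgcd2]
  have h1 : m / (m / g) = g := Nat.div_div_self (Nat.gcd_dvd_left m d) hm0.ne'
  have h2 : sig m d / (m / g) = d / g := by
    rw [sig_eq m d hd0, ← hg, Nat.mul_div_cancel_left _ hm'0]
  rw [h1, h2, hdd]

lemma sig_mul_self (m d : ℕ) (hd : 0 < d) :
    sig m d * d = m * (d / Nat.gcd m d) ^ 2 := by
  have hmm : Nat.gcd m d * (m / Nat.gcd m d) = m :=
    Nat.mul_div_cancel' (Nat.gcd_dvd_left m d)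
  have hdd : Nat.gcd m d * (d / Nat.gcd m d) = d :=
    Nat.mul_div_cancel' (Nat.gcd_dvd_right m d)
  rw [sig_eq m d hd]
  calc (m / Nat.gcd m d * (d / Nat.gcd m d)) * d
      = (m / Nat.gcd m d * (d / Nat.gcd m d)) * (Nat.gcd m d * (d / Nat.gcd m d)) := by rw [hdd]
    _ = (Nat.gcd m d * (m / Nat.gcd m d)) * (d / Nat.gcd m d) ^ 2 := by ring
    _ = m * (d / Nat.gcd m d) ^ 2 := by rw [hmm]

lemma mul_sig (m d : ℕ) (hd : 0 < d) :
    m * sig m d = (m / Nat.gcd m d) ^ 2 * d := by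
  have hmm : Nat.gcd m d * (m / Nat.gcd m d) = m :=
    Nat.mul_div_cancel' (Nat.gcd_dvd_left m d)
  have hdd : Nat.gcd m d * (d / Nat.gcd m d) = d :=
    Nat.mul_div_cancel' (Nat.gcd_dvd_right m d)
  rw [sig_eq m d hd]
  calc m * (m / Nat.gcd m d * (d / Nat.gcd m d))
      = (Nat.gcd m d * (m / Nat.gcd m d)) * (m / Nat.gcd m d * (d / Nat.gcd m d)) := by rw [hmm]
    _ = (m / Nat.gcd m d) ^ 2 * (Nat.gcd m d * (d / Nat.gcd m d)) := by ring
    _ = (m / Nat.gcd m d) ^ 2 * d := by rw [hdd]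

/-- `√(σ d) √d = √m (d/g)`. -/
lemma sqrt_sig_mul_sqrt (m d : ℕ) (hd : 0 < d) :
    Real.sqrt (sig m d) * Real.sqrt d
      = Real.sqrt m * ((d / Nat.gcd m d : ℕ) : ℝ) := by
  rw [← Real.sqrt_mul (by positivity) (d : ℝ)]
  have h : ((sig m d : ℕ) : ℝ) * (d : ℝ) = (m : ℝ) * ((d / Nat.gcd m d : ℕ) : ℝ) ^ 2 := by
    exact_mod_cast congrArg (Nat.cast : ℕ → ℝ) (sig_mul_self m d hd)
  rw [h, Real.sqrt_mul (by positivity), Real.sqrt_sq (by positivity)]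

/-- `√m √(σ d) = (m/g) √d`. -/
lemma sqrt_mul_sqrt_sig (m d : ℕ) (hd : 0 < d) :
    Real.sqrt m * Real.sqrt (sig m d)
      = ((m / Nat.gcd m d : ℕ) : ℝ) * Real.sqrt d := by
  rw [← Real.sqrt_mul (by positivity) ((sig m d : ℕ) : ℝ)]
  have h : ((m : ℕ) : ℝ) * ((sig m d : ℕ) : ℝ)
      = ((m / Nat.gcd m d : ℕ) : ℝ) ^ 2 * (d : ℝ) := by
    exact_mod_cast congrArg (Nat.cast : ℕ → ℝ) (mul_sig m d hd)
  rw [h, Real.sqrt_mul (by positivity), Real.sqrt_sq (by positivity)]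

/-- Coordinatewise description of membership in `C_N`. -/
lemma coord_mem_CN (N : ℕ) (v : EuclideanSpace ℝ (divIdx N)) :
    v ∈ CN N ↔ ∀ d : divIdx N, ∃ k : ℤ, v d = (k : ℝ) * Real.sqrt d.1 := by
  constructor
  · intro hv d
    induction hv using Submodule.span_induction with
    | mem x hx =>
        obtain ⟨d', rfl⟩ := hx
        by_cases h : d = d'
        · subst h
          exact ⟨1, by simp [cnBasis, EuclideanSpace.single_apply]⟩
        · exact ⟨0, by simp [cnBasis, EuclideanSpace.single_apply, h]⟩
    | zero => exact ⟨0, by simp⟩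
    | add x y hx hy ihx ihy =>
        obtain ⟨k1, h1⟩ := ihx; obtain ⟨k2, h2⟩ := ihy
        refine ⟨k1 + k2, ?_⟩
        have : (x + y) d = x d + y d := rfl
        rw [this, h1, h2]; push_cast; ring
    | smul a x hx ih =>
        obtain ⟨k, h⟩ := ih
        refine ⟨a * k, ?_⟩
        have : (a • x) d = (a : ℝ) * x d := by
          simp [zsmul_eq_mul]
        rw [this, h]; push_cast; ring
  · intro h
    choose k hk using h
    have hv : v = ∑ d : divIdx N, k d • cnBasis N d := by
      ext d
      have heval : (∑ d' : divIdx N, k d' • cnBasis N d') d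
          = ∑ d' : divIdx N, (k d' : ℝ) * (Real.sqrt d'.1 * (if d = d' then (1:ℝ) else 0)) := by
        rw [WithLp.ofLp_sum, Finset.sum_apply]
        refine Finset.sum_congr rfl fun d' _ => ?_
        simp [cnBasis, EuclideanSpace.single_apply, zsmul_eq_mul]
      rw [heval]
      rw [Finset.sum_eq_single d]
      · simp [hk d]
      · intro b _ hb
        simp [Ne.symm hb]
      · intro hd; exact absurd (Finset.mem_univ d) hd
    rw [hv]
    exact Submodule.sum_mem _ fun d _ =>
      Submodule.smul_mem _ (k d) (Submodule.subset_span ⟨d, rfl⟩)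

/-- Coordinatewise description of the dual condition. -/
lemma dual_iff (N : ℕ) (v : EuclideanSpace ℝ (divIdx N)) :
    (∀ x ∈ CN N, ∃ k : ℤ, ⟪v, x⟫ = (k : ℝ)) ↔
      ∀ d : divIdx N, ∃ k : ℤ, Real.sqrt d.1 * v d = (k : ℝ) := by
  have hinner : ∀ d : divIdx N, ⟪v, cnBasis N d⟫ = Real.sqrt d.1 * v d := by
    intro d
    rw [cnBasis, real_inner_smul_right]
    congr 1
    have := EuclideanSpace.inner_single_right (𝕜 := ℝ) d (1 : ℝ) v
    simpa using this
  constructor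
  · intro hv d
    obtain ⟨k, hk⟩ := hv (cnBasis N d) (Submodule.subset_span ⟨d, rfl⟩)
    exact ⟨k, by rw [← hinner d]; exact hk⟩
  · intro h x hx
    induction hx using Submodule.span_induction with
    | mem x hx =>
        obtain ⟨d, rfl⟩ := hx
        obtain ⟨k, hk⟩ := h d
        exact ⟨k, by rw [hinner d]; exact hk⟩
    | zero => exact ⟨0, by simp⟩
    | add x y hx hy ihx ihy =>
        obtain ⟨k1, h1⟩ := ihx; obtain ⟨k2, h2⟩ := ihy
        exact ⟨k1 + k2, by rw [inner_add_right, h1, h2]; push_cast; ring⟩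
    | smul a x hx ih =>
        obtain ⟨k, h'⟩ := ih
        refine ⟨a * k, ?_⟩
        have : (a • x : EuclideanSpace ℝ (divIdx N)) = (a : ℝ) • x :=
          (Int.cast_smul_eq_zsmul ℝ a x).symm
        rw [this, real_inner_smul_right, h']; push_cast; ring

end CNAux

open CNAux in
/-- For square-free `N` and each (exact) divisor `m` of `N`, the rescaled partial dual
`√m·(C_N)^{*,m}` is isometric to `C_N`: the lattice `C_N` is strongly `N`-modular.
Here `(C_N)^{*,m} = C_N* ∩ (1/m)·C_N`. -/
theorem CN_strongly_modular (N : ℕ) (hN : 0 < N) (hsq : Squarefree N)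
    (m : ℕ) (hm : m ∣ N) (hexact : Nat.Coprime m (N / m)) :
    ∃ f : EuclideanSpace ℝ (divIdx N) ≃ₗᵢ[ℝ] EuclideanSpace ℝ (divIdx N),
      f '' {w | ∃ v, ((∀ x ∈ CN N, ∃ k : ℤ, ⟪v, x⟫ = (k : ℝ)) ∧ (m : ℝ) • v ∈ CN N) ∧
            w = Real.sqrt m • v} = (CN N : Set (EuclideanSpace ℝ (divIdx N))) := by
  have hm0 : 0 < m := Nat.pos_of_dvd_of_pos hm hN
  have hsm : Real.sqrt m ≠ 0 := by
    positivity
  -- the divisor of `d`-data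
  have hdvd : ∀ d : divIdx N, d.1 ∣ N := fun d => (Nat.mem_divisors.mp d.2).1
  have hdpos : ∀ d : divIdx N, 0 < d.1 := fun d => Nat.pos_of_dvd_of_pos (hdvd d) hN
  -- the permutation
  have hmem : ∀ d : divIdx N, sig m d.1 ∈ N.divisors := fun d =>
    Nat.mem_divisors.mpr ⟨sig_dvd N m d.1 hm (hdvd d) hN, hN.ne'⟩
  let e : divIdx N ≃ divIdx N :=
    { toFun := fun d => ⟨sig m d.1, hmem d⟩
      invFun := fun d => ⟨sig m d.1, hmem d⟩
      left_inv := fun d => Subtype.ext (sig_sig N m d.1 hsq hm (hdvd d) hN)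
      right_inv := fun d => Subtype.ext (sig_sig N m d.1 hsq hm (hdvd d) hN) }
  refine ⟨LinearIsometryEquiv.piLpCongrLeft 2 ℝ ℝ e, ?_⟩
  set f := LinearIsometryEquiv.piLpCongrLeft 2 ℝ ℝ e with hf
  -- characterization of the set S
  have hS : ∀ w : EuclideanSpace ℝ (divIdx N),
      (∃ v, ((∀ x ∈ CN N, ∃ k : ℤ, ⟪v, x⟫ = (k : ℝ)) ∧ (m : ℝ) • v ∈ CN N) ∧
        w = Real.sqrt m • v)
      ↔ ∀ d : divIdx N, ∃ b : ℤ, w d = (b : ℝ) * Real.sqrt (sig m d.1) := by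
    intro w
    constructor
    · rintro ⟨v, ⟨hdual, hmemv⟩, rfl⟩ d
      have hd0 : 0 < d.1 := hdpos d
      have hsd : Real.sqrt d.1 ≠ 0 := by positivity
      obtain ⟨a, ha⟩ := (dual_iff N v).mp hdual d
      obtain ⟨k, hk⟩ := (coord_mem_CN N _).mp hmemv d
      have hmk : ((m : ℝ) • v) d = (m : ℝ) * v d := rfl
      rw [hmk] at hk
      -- m * a = k * d in ℤ
      have hint : (m : ℤ) * a = k * d.1 := by
        have hdd2 : Real.sqrt d.1 * Real.sqrt d.1 = (d.1 : ℝ) :=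
          Real.mul_self_sqrt (Nat.cast_nonneg _)
        have h1 : (m : ℝ) * (Real.sqrt d.1 * v d) = (k : ℝ) * ((d.1 : ℝ)) := by
          calc (m : ℝ) * (Real.sqrt d.1 * v d) = ((m : ℝ) * v d) * Real.sqrt d.1 := by ring
            _ = ((k : ℝ) * Real.sqrt d.1) * Real.sqrt d.1 := by rw [hk]
            _ = (k : ℝ) * (Real.sqrt d.1 * Real.sqrt d.1) := by ring
            _ = (k : ℝ) * (d.1 : ℝ) := by rw [hdd2]
        rw [ha] at h1
        exact_mod_cast h1
      -- d' ∣ a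
      set g := Nat.gcd m d.1 with hg
      have hg0 : 0 < g := Nat.gcd_pos_of_pos_right m hd0
      have hmm : g * (m / g) = m := Nat.mul_div_cancel' (Nat.gcd_dvd_left m d.1)
      have hdd : g * (d.1 / g) = d.1 := Nat.mul_div_cancel' (Nat.gcd_dvd_right m d.1)
      have hco : Nat.Coprime (d.1 / g) (m / g) :=
        (Nat.coprime_div_gcd_div_gcd hg0).symm
      have hint2 : ((m / g : ℕ) : ℤ) * a = k * ((d.1 / g : ℕ) : ℤ) := by
        have h3 : (g : ℤ) * (((m / g : ℕ) : ℤ) * a) = (g : ℤ) * (k * ((d.1 / g : ℕ) : ℤ)) := by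
          calc (g : ℤ) * (((m / g : ℕ) : ℤ) * a) = ((g * (m / g) : ℕ) : ℤ) * a := by push_cast; ring
            _ = (m : ℤ) * a := by rw [hmm]
            _ = k * d.1 := hint
            _ = k * ((g * (d.1 / g) : ℕ) : ℤ) := by rw [hdd]
            _ = (g : ℤ) * (k * ((d.1 / g : ℕ) : ℤ)) := by push_cast; ring
        exact mul_left_cancel₀ (by exact_mod_cast hg0.ne') h3
      have hdvda : ((d.1 / g : ℕ) : ℤ) ∣ a := by
        have h4 : ((d.1 / g : ℕ) : ℤ) ∣ ((m / g : ℕ) : ℤ) * a := ⟨k, by linarith [hint2]⟩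
        exact (Nat.isCoprime_iff_coprime.mpr hco).dvd_of_dvd_mul_left h4
      obtain ⟨b, hb⟩ := hdvda
      refine ⟨b, ?_⟩
      -- w d = √m * v d ; show = b √(σ d)
      have hw : (Real.sqrt m • v) d = Real.sqrt m * v d := rfl
      have hkey := sqrt_sig_mul_sqrt m d.1 hd0
      -- multiply by √d and cancel
      have hmain : Real.sqrt m * v d * Real.sqrt d.1
          = (b : ℝ) * Real.sqrt (sig m d.1) * Real.sqrt d.1 := by
        calc Real.sqrt m * v d * Real.sqrt d.1
            = Real.sqrt m * (Real.sqrt d.1 * v d) := by ring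
          _ = Real.sqrt m * (a : ℝ) := by rw [ha]
          _ = Real.sqrt m * (((d.1 / g : ℕ) : ℤ) * b : ℤ) := by rw [← hb]
          _ = (b : ℝ) * (Real.sqrt m * ((d.1 / g : ℕ) : ℝ)) := by
                simp only [Int.cast_mul, Int.cast_natCast]; ring
          _ = (b : ℝ) * (Real.sqrt (sig m d.1) * Real.sqrt d.1) := by rw [← hkey]
          _ = _ := by ring
      rw [hw]
      exact mul_right_cancel₀ hsd hmain
    · intro h
      choose b hb using h
      refine ⟨(Real.sqrt m)⁻¹ • w, ⟨?_, ?_⟩, ?_⟩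
      · rw [dual_iff]
        intro d
        have hd0 : 0 < d.1 := hdpos d
        refine ⟨b d * ((d.1 / Nat.gcd m d.1 : ℕ) : ℤ), ?_⟩
        have hvd : ((Real.sqrt m)⁻¹ • w) d = (Real.sqrt m)⁻¹ * w d := rfl
        rw [hvd, hb d]
        have hkey := sqrt_sig_mul_sqrt m d.1 hd0
        calc Real.sqrt d.1 * ((Real.sqrt m)⁻¹ * ((b d : ℝ) * Real.sqrt (sig m d.1)))
            = (Real.sqrt m)⁻¹ * ((b d : ℝ) * (Real.sqrt (sig m d.1) * Real.sqrt d.1)) := by ring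
          _ = (Real.sqrt m)⁻¹ * ((b d : ℝ) * (Real.sqrt m * ((d.1 / Nat.gcd m d.1 : ℕ) : ℝ))) := by
                rw [hkey]
          _ = ((Real.sqrt m)⁻¹ * Real.sqrt m) * ((b d : ℝ) * ((d.1 / Nat.gcd m d.1 : ℕ) : ℝ)) := by
                ring
          _ = (b d : ℝ) * ((d.1 / Nat.gcd m d.1 : ℕ) : ℝ) := by
                rw [inv_mul_cancel₀ hsm, one_mul]
          _ = ((b d * ((d.1 / Nat.gcd m d.1 : ℕ) : ℤ) : ℤ) : ℝ) := by
                simp only [Int.cast_mul, Int.cast_natCast]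
      · rw [coord_mem_CN]
        intro d
        have hd0 : 0 < d.1 := hdpos d
        refine ⟨b d * ((m / Nat.gcd m d.1 : ℕ) : ℤ), ?_⟩
        have hvd : ((m : ℝ) • ((Real.sqrt m)⁻¹ • w)) d = (m : ℝ) * ((Real.sqrt m)⁻¹ * w d) := rfl
        rw [hvd, hb d]
        have hkey := sqrt_mul_sqrt_sig m d.1 hd0
        set s := Real.sqrt m with hs
        have hmsq : (m : ℝ) = s * s := (Real.mul_self_sqrt (Nat.cast_nonneg m)).symm
        rw [hmsq]
        calc s * s * (s⁻¹ * ((b d : ℝ) * Real.sqrt (sig m d.1)))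
            = (s * s⁻¹) * (s * ((b d : ℝ) * Real.sqrt (sig m d.1))) := by ring
          _ = s * ((b d : ℝ) * Real.sqrt (sig m d.1)) := by
                rw [mul_inv_cancel₀ hsm, one_mul]
          _ = (b d : ℝ) * (s * Real.sqrt (sig m d.1)) := by ring
          _ = (b d : ℝ) * (((m / Nat.gcd m d.1 : ℕ) : ℝ) * Real.sqrt d.1) := by rw [hkey]
          _ = ((b d * ((m / Nat.gcd m d.1 : ℕ) : ℤ) : ℤ) : ℝ) * Real.sqrt d.1 := by
                simp only [Int.cast_mul, Int.cast_natCast]; ring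
      · ext d
        have h0 : (Real.sqrt m • ((Real.sqrt m)⁻¹ • w)) d
            = Real.sqrt m * ((Real.sqrt m)⁻¹ * w d) := rfl
        rw [h0, ← mul_assoc, mul_inv_cancel₀ hsm, one_mul]
  -- image computation
  ext w
  constructor
  · rintro ⟨u, hu, rfl⟩
    rw [SetLike.mem_coe, coord_mem_CN]
    intro d
    obtain ⟨b, hb⟩ := (hS u).mp hu (e.symm d)
    refine ⟨b, ?_⟩
    have happ : f u d = u (e.symm d) := by
      rw [hf, LinearIsometryEquiv.piLpCongrLeft_apply]
      rfl
    rw [happ, hb]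
    have hval : sig m ((e.symm d).1) = d.1 := congrArg Subtype.val (e.apply_symm_apply d)
    rw [hval]
  · intro hw
    rw [SetLike.mem_coe, coord_mem_CN] at hw
    refine ⟨f.symm w, ?_, f.apply_symm_apply w⟩
    refine (hS (f.symm w)).mpr fun d => ?_
    obtain ⟨b, hb⟩ := hw (e d)
    refine ⟨b, ?_⟩
    have happ : f.symm w d = w (e d) := by
      rw [hf, LinearIsometryEquiv.piLpCongrLeft_symm, LinearIsometryEquiv.piLpCongrLeft_apply]
      rfl
    rw [happ, hb]
    rfl
end

section
/- Let N be square-free and let L be a strongly N-modular lattice containing a vector of length 1 (square length 1). Then L has an orthogonal summand isometric to C_N = ⊥_{d∣N} √d·ℤ. -/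
open scoped RealInnerProductSpace

/-- Auxiliary arithmetic fact: if `d ≠ e` and an integer `c` is divisible by both `d` and `e`
with `c ^ 2 ≤ d * e`, then `c = 0`. -/
lemma aux_int_zero (d e : ℕ) (hd : 0 < d) (he : 0 < e) (hne : d ≠ e) (c : ℤ)
    (hdc : (d : ℤ) ∣ c) (hec : (e : ℤ) ∣ c) (hc : c ^ 2 ≤ (d : ℤ) * e) : c = 0 := by
  by_contra h0
  set g := Nat.gcd d e with hg
  set l := Nat.lcm d e with hl
  have hgl : g * l = d * e := Nat.gcd_mul_lcm d e
  have hgd : g ≤ d := Nat.le_of_dvd hd (Nat.gcd_dvd_left d e)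
  have hge : g ≤ e := Nat.le_of_dvd he (Nat.gcd_dvd_right d e)
  have hglt : g * g < d * e := by
    rcases lt_or_eq_of_le hgd with h | h
    · exact Nat.mul_lt_mul_of_lt_of_le h hge he
    · rcases lt_or_eq_of_le hge with h' | h'
      · exact Nat.mul_lt_mul_of_le_of_lt hgd h' hd
      · exact absurd (h.symm.trans h') hne
  have hde : 0 < d * e := Nat.mul_pos hd he
  have hlpos : 0 < l := Nat.pos_of_ne_zero (by
    intro h
    rw [h, Nat.mul_zero] at hgl
    omega)
  have hlgt : d * e < l * l := by
    have h1 : (d * e) * (d * e) = (g * g) * (l * l) := by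
      rw [← hgl]; ring
    have h3 : (d * e) * (d * e) < (d * e) * (l * l) := by
      rw [h1, Nat.mul_comm (g*g) (l*l), Nat.mul_comm (d*e) (l*l)]
      exact mul_lt_mul_of_pos_left hglt (Nat.mul_pos hlpos hlpos)
    exact Nat.lt_of_mul_lt_mul_left h3
  have hlc : (l : ℤ) ∣ c := by
    have := Int.lcm_dvd (Int.dvd_natAbs.2 hdc) (Int.dvd_natAbs.2 hec)
    exact Int.natCast_dvd.2 (by simpa [Int.lcm, hl] using this)
  have hlabs : (l : ℤ) ≤ |c| := by
    apply Int.le_of_dvd (abs_pos.2 h0) ((dvd_abs _ _).2 hlc)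
  have h1 : (l : ℤ) * l ≤ c ^ 2 := by
    have h2 : (l : ℤ) * l ≤ |c| * |c| := by
      apply mul_le_mul hlabs hlabs (by positivity) (abs_nonneg c)
    calc (l : ℤ) * l ≤ |c| * |c| := h2
    _ = c ^ 2 := by rw [← abs_mul, ← sq, abs_sq]
  have : ((d : ℤ) * e) < (l : ℤ) * l := by exact_mod_cast hlgt
  omega

/-- Let `N` be square-free and `L` a strongly `N`-modular (integral) lattice containing a
vector of square length 1. Then `L` has an orthogonal summand isometric to `C_N`. -/
theorem strongly_modular_with_norm_one_vector {n : ℕ} (N : ℕ) (hN : 0 < N)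
    (hsq : Squarefree N)
    (L : Submodule ℤ (EuclideanSpace ℝ (Fin n)))
    (hint : ∀ x ∈ L, ∀ y ∈ L, ∃ k : ℤ, ⟪x, y⟫ = (k : ℝ))
    (hmod : ∀ m : ℕ, m ∣ N → Nat.Coprime m (N / m) →
      ∃ f : EuclideanSpace ℝ (Fin n) ≃ₗᵢ[ℝ] EuclideanSpace ℝ (Fin n),
        f '' {w | ∃ v, ((∀ x ∈ L, ∃ k : ℤ, ⟪v, x⟫ = (k : ℝ)) ∧ (m : ℝ) • v ∈ L) ∧
              w = Real.sqrt m • v} = (L : Set (EuclideanSpace ℝ (Fin n))))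
    (hone : ∃ v ∈ L, ⟪v, v⟫ = 1) :
    ∃ S T : Submodule ℤ (EuclideanSpace ℝ (Fin n)),
      S ⊔ T = L ∧ S ⊓ T = ⊥ ∧
      (∀ x ∈ S, ∀ y ∈ T, ⟪x, y⟫ = 0) ∧
      ∃ f : EuclideanSpace ℝ (divIdx N) →ₗᵢ[ℝ] EuclideanSpace ℝ (Fin n),
        f '' (CN N : Set (EuclideanSpace ℝ (divIdx N))) =
          (S : Set (EuclideanSpace ℝ (Fin n))) := by
  classical
  obtain ⟨u, huL, huu⟩ := hone
  -- every divisor of a squarefree number is an exact divisor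
  have hcop : ∀ d : ℕ, d ∣ N → Nat.Coprime d (N / d) := by
    intro d hd
    have h1 : d * (N / d) = N := Nat.mul_div_cancel' hd
    have h2 : Nat.gcd d (N / d) * Nat.gcd d (N / d) ∣ N := by
      have h3 : Nat.gcd d (N / d) * Nat.gcd d (N / d) ∣ d * (N / d) :=
        mul_dvd_mul (Nat.gcd_dvd_left _ _) (Nat.gcd_dvd_right _ _)
      rwa [h1] at h3
    exact Nat.isUnit_iff.1 (hsq _ h2)
  choose f hf using fun (d : divIdx N) =>
    hmod d.1 (Nat.dvd_of_mem_divisors d.2) (hcop _ (Nat.dvd_of_mem_divisors d.2))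
  set w : divIdx N → EuclideanSpace ℝ (Fin n) :=
    fun d => f d (Real.sqrt d.1 • u) with hwdef
  have hdpos : ∀ d : divIdx N, 0 < d.1 := fun d => Nat.pos_of_mem_divisors d.2
  have hsqpos : ∀ d : divIdx N, (0:ℝ) < Real.sqrt d.1 := fun d =>
    Real.sqrt_pos.2 (by exact_mod_cast hdpos d)
  -- u is in the set defining the m-modular rescaling
  have humem : ∀ d : divIdx N,
      Real.sqrt d.1 • u ∈ {w | ∃ v, ((∀ x ∈ L, ∃ k : ℤ, ⟪v, x⟫ = (k : ℝ)) ∧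
        ((d.1 : ℝ)) • v ∈ L) ∧ w = Real.sqrt d.1 • v} := by
    intro d
    refine ⟨u, ⟨fun x hx => hint u huL x hx, ?_⟩, rfl⟩
    have : ((d.1 : ℝ)) • u = ((d.1 : ℤ)) • u := by
      rw [← Int.cast_smul_eq_zsmul ℝ]; norm_num
    rw [this]
    exact L.smul_mem _ huL
  have hwL : ∀ d : divIdx N, w d ∈ L := by
    intro d
    have h : w d ∈ (L : Set (EuclideanSpace ℝ (Fin n))) := by
      rw [← hf d]
      exact ⟨_, humem d, rfl⟩
    exact h
  -- inner products with lattice vectors are divisible by d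
  have hinner : ∀ (d : divIdx N) (x : EuclideanSpace ℝ (Fin n)), x ∈ L →
      ∃ k : ℤ, ⟪w d, x⟫ = (d.1 : ℝ) * k := by
    intro d x hx
    have hx' : x ∈ f d '' {w | ∃ v, ((∀ x ∈ L, ∃ k : ℤ, ⟪v, x⟫ = (k : ℝ)) ∧
        ((d.1 : ℝ)) • v ∈ L) ∧ w = Real.sqrt d.1 • v} := by
      rw [hf d]; exact hx
    obtain ⟨w', ⟨v, ⟨hv1, hv2⟩, rfl⟩, rfl⟩ := hx'
    obtain ⟨k, hk⟩ := hv1 u huL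
    have hk2 : ⟪u, v⟫ = (k : ℝ) := by rw [real_inner_comm]; exact hk
    refine ⟨k, ?_⟩
    show ⟪f d (Real.sqrt d.1 • u), f d (Real.sqrt d.1 • v)⟫ = _
    rw [LinearIsometryEquiv.inner_map_map, real_inner_smul_left, real_inner_smul_right,
      ← mul_assoc, Real.mul_self_sqrt (Nat.cast_nonneg _), hk2]
  have hnorm : ∀ d : divIdx N, ⟪w d, w d⟫ = (d.1 : ℝ) := by
    intro d
    show ⟪f d (Real.sqrt d.1 • u), f d (Real.sqrt d.1 • u)⟫ = _
    rw [LinearIsometryEquiv.inner_map_map, real_inner_smul_left, real_inner_smul_right,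
      huu, mul_one, Real.mul_self_sqrt (Nat.cast_nonneg _)]
  have hwnorm : ∀ d : divIdx N, ‖w d‖ = Real.sqrt d.1 := by
    intro d
    rw [@norm_eq_sqrt_real_inner, hnorm]
  -- pairwise orthogonality
  have horth : ∀ d e : divIdx N, d ≠ e → ⟪w d, w e⟫ = 0 := by
    intro d e hne
    obtain ⟨k, hk⟩ := hinner d (w e) (hwL e)
    obtain ⟨k', hk'⟩ := hinner e (w d) (hwL d)
    have hsym : ⟪w d, w e⟫ = ⟪w e, w d⟫ := real_inner_comm _ _
    have hcr : ⟪w d, w e⟫ = (((d.1 : ℤ) * k : ℤ) : ℝ) := by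
      rw [hk]; push_cast; ring
    have hce : ((d.1 : ℤ) * k) = (e.1 : ℤ) * k' := by
      have h := hcr.symm.trans (hsym.trans hk')
      exact_mod_cast h
    have hbound : (((d.1 : ℤ) * k : ℤ) : ℝ) ^ 2 ≤ (d.1 : ℝ) * e.1 := by
      have h1 : |⟪w d, w e⟫| ≤ ‖w d‖ * ‖w e‖ := abs_real_inner_le_norm _ _
      rw [hcr, hwnorm, hwnorm] at h1
      have h2 : ((((d.1 : ℤ) * k : ℤ) : ℝ))^2 = |(((d.1 : ℤ) * k : ℤ) : ℝ)| * |(((d.1 : ℤ) * k : ℤ) : ℝ)| := by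
        rw [← abs_mul, ← sq, abs_sq]
      rw [h2]
      calc |(((d.1 : ℤ) * k : ℤ) : ℝ)| * |(((d.1 : ℤ) * k : ℤ) : ℝ)| ≤
            (Real.sqrt d.1 * Real.sqrt e.1) * (Real.sqrt d.1 * Real.sqrt e.1) :=
          mul_le_mul h1 h1 (abs_nonneg _) (by positivity)
        _ = (d.1 : ℝ) * e.1 := by
          rw [mul_mul_mul_comm, Real.mul_self_sqrt (Nat.cast_nonneg _),
            Real.mul_self_sqrt (Nat.cast_nonneg _)]
    have hczero : ((d.1 : ℤ) * k) = 0 := by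
      apply aux_int_zero d.1 e.1 (hdpos d) (hdpos e)
        (fun h => hne (Subtype.ext h)) _ ⟨k, rfl⟩ ⟨k', hce⟩
      exact_mod_cast hbound
    rw [hcr, hczero]; norm_num
  -- the orthonormal family
  set v' : divIdx N → EuclideanSpace ℝ (Fin n) :=
    fun d => (Real.sqrt d.1)⁻¹ • w d with hv'def
  have hortho : Orthonormal ℝ v' := by
    rw [orthonormal_iff_ite]
    intro i j
    rw [hv'def]
    simp only [real_inner_smul_left, real_inner_smul_right]
    by_cases h : i = j
    · subst h
      rw [hnorm i, if_pos rfl, ← mul_assoc, ← mul_inv,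
        Real.mul_self_sqrt (Nat.cast_nonneg _)]
      exact inv_mul_cancel₀ (by exact_mod_cast (hdpos i).ne')
    · rw [horth i j h, if_neg h]; ring
  -- the linear isometry
  set b := (EuclideanSpace.basisFun (divIdx N) ℝ).toBasis with hbdef
  set T0 : EuclideanSpace ℝ (divIdx N) →ₗ[ℝ] EuclideanSpace ℝ (Fin n) :=
    b.constr ℝ v' with hT0def
  have hT0b : ∀ d : divIdx N, T0 (EuclideanSpace.single d 1) = v' d := by
    intro d
    have : b d = EuclideanSpace.single d 1 := by
      rw [hbdef]
      simp [EuclideanSpace.basisFun_apply]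
    rw [← this, hT0def, Module.Basis.constr_basis]
  have hxsum : ∀ x : EuclideanSpace ℝ (divIdx N),
      x = ∑ i, x i • EuclideanSpace.single i (1:ℝ) := by
    intro x
    ext j
    rw [show ((∑ i, x i • EuclideanSpace.single i (1:ℝ)) j)
        = ∑ i, (x i • EuclideanSpace.single i (1:ℝ)) j from by
      rw [WithLp.ofLp_sum]; exact Finset.sum_apply j Finset.univ _]
    simp [EuclideanSpace.single_apply]
  have hkey : ∀ x y : EuclideanSpace ℝ (divIdx N), ⟪T0 x, T0 y⟫ = ⟪x, y⟫ := by
    intro x y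
    conv_lhs => rw [hxsum x, hxsum y]
    rw [map_sum, map_sum]
    simp_rw [map_smul, hT0b]
    rw [hortho.inner_sum]
    rw [PiLp.inner_apply]
    simp [conj_trivial]
    exact Finset.sum_congr rfl (fun _ _ => mul_comm _ _)
  set F : EuclideanSpace ℝ (divIdx N) →ₗᵢ[ℝ] EuclideanSpace ℝ (Fin n) :=
    T0.isometryOfInner hkey with hFdef
  have hFw : ∀ d : divIdx N, F (cnBasis N d) = w d := by
    intro d
    show T0 (cnBasis N d) = w d
    rw [cnBasis, map_smul, hT0b, hv'def]
    rw [smul_smul, mul_inv_cancel₀ (ne_of_gt (hsqpos d)), one_smul]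
  -- the submodules
  set K : Submodule ℝ (EuclideanSpace ℝ (Fin n)) :=
    Submodule.span ℝ (Set.range w) with hKdef
  set S : Submodule ℤ (EuclideanSpace ℝ (Fin n)) :=
    Submodule.span ℤ (Set.range w) with hSdef
  set T : Submodule ℤ (EuclideanSpace ℝ (Fin n)) :=
    L ⊓ (Kᗮ.restrictScalars ℤ) with hTdef
  have hSK : ∀ x, x ∈ S → x ∈ K :=
    fun x hx => Submodule.span_le_restrictScalars ℤ ℝ (Set.range w) hx
  have hSL : S ≤ L := Submodule.span_le.2 (by rintro y ⟨d, rfl⟩; exact hwL d)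
  refine ⟨S, T, ?_, ?_, ?_, ?_⟩
  · -- S ⊔ T = L
    apply le_antisymm
    · exact sup_le hSL inf_le_left
    · intro x hx
      choose k hk using fun d : divIdx N => hinner d x hx
      set s := ∑ d : divIdx N, k d • w d with hs
      have hsS : s ∈ S := Submodule.sum_mem _
        (fun d _ => Submodule.smul_mem _ _ (Submodule.subset_span ⟨d, rfl⟩))
      have hrL : x - s ∈ L := Submodule.sub_mem _ hx (hSL hsS)
      have hro : ∀ e : divIdx N, ⟪w e, x - s⟫ = 0 := by
        intro e
        rw [inner_sub_right, hs, inner_sum]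
        have hterm : ∀ d : divIdx N, ⟪w e, k d • w d⟫ = (k d : ℝ) * ⟪w e, w d⟫ := by
          intro d
          rw [← Int.cast_smul_eq_zsmul ℝ (k d) (w d), real_inner_smul_right]
        have hsum : ∑ d : divIdx N, ⟪w e, k d • w d⟫ = (k e : ℝ) * (e.1 : ℝ) := by
          rw [Finset.sum_congr rfl (fun d _ => hterm d)]
          rw [Finset.sum_eq_single e]
          · rw [hnorm e]
          · intro d _ hde
            rw [horth e d (Ne.symm hde), mul_zero]
          · intro h; exact absurd (Finset.mem_univ e) h
        rw [hsum, hk e]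
        ring
      have hrK : x - s ∈ Kᗮ := by
        rw [Submodule.mem_orthogonal]
        intro y hy
        rw [hKdef] at hy
        induction hy using Submodule.span_induction with
        | mem y hy => obtain ⟨e, rfl⟩ := hy; exact hro e
        | zero => exact inner_zero_left _
        | add y z _ _ hy hz => rw [inner_add_left, hy, hz, add_zero]
        | smul a y _ hy => rw [real_inner_smul_left, hy, mul_zero]
      have hrT : x - s ∈ T := by
        rw [hTdef]
        exact Submodule.mem_inf.2 ⟨hrL, hrK⟩
      have hxe : x = s + (x - s) := by abel
      rw [hxe]
      exact Submodule.add_mem _ (Submodule.mem_sup_left hsS) (Submodule.mem_sup_right hrT)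
  · -- S ⊓ T = ⊥
    rw [eq_bot_iff]
    intro x hx
    have h1 : x ∈ K := hSK x hx.1
    have h2 : x ∈ Kᗮ := hx.2.2
    have h3 : ⟪x, x⟫ = 0 := Submodule.inner_right_of_mem_orthogonal h1 h2
    rw [Submodule.mem_bot]
    exact inner_self_eq_zero.1 h3
  · -- orthogonality
    intro x hxS y hyT
    exact Submodule.inner_right_of_mem_orthogonal (hSK x hxS) hyT.2
  · -- the isometry and its image
    refine ⟨F, ?_⟩
    have himg : ⇑(F.toLinearMap.restrictScalars ℤ) '' Set.range (cnBasis N) = Set.range w := by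
      rw [← Set.range_comp]
      exact congrArg Set.range (funext fun d => hFw d)
    have h1 : ⇑F '' (CN N : Set (EuclideanSpace ℝ (divIdx N))) =
        ⇑(F.toLinearMap.restrictScalars ℤ) '' (CN N : Set (EuclideanSpace ℝ (divIdx N))) := rfl
    rw [h1, ← Submodule.map_coe]
    rw [show (CN N).map (F.toLinearMap.restrictScalars ℤ) = S by
      rw [CN, Submodule.map_span, himg, hSdef]]
end
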